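/- Let X_u and X_v be independent random variables (the model-form-uncertainty parameters and the shared model parameters respectively), and let X̃_ũ be a random variable independent of X_v (an alternative model-form-uncertainty parametrization). Let f(X_u, X_v) and q(X̃_ũ, X_v) be square-integrable real-valued outputs of the two models. Fix ε₁, ε₂ > 0 and assume: (1) E[ |Var(f(X_u,X_v) | X_v) − Var(q(X̃_ũ,X_v) | X_v)| ] < ε₁ (the L¹ distance between the conditional variances given X_v); (2) |Var(f(X_u,X_v)) − Var(q(X̃_ũ,X_v))| < ε₂; (3) Var(f(X_u,X_v)) = 1, and Var(q(X̃_ũ,X_v)) > 0. Then the grouped first-order Sobol' indices of the model-form-uncertainty groups, S_u = Var(E[f(X_u,X_v) | X_v]) / Var(f(X_u,X_v)) and S_ũ = Var(E[q(X̃_ũ,X_v) | X_v]) / Var(q(X̃_ũ,X_v)) (each equal to one minus the grouped total index of the corresponding MFU group), satisfy |S_u − S_ũ| < ε₁ + 2ε₂. -/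

import Mathlib

open MeasureTheory ProbabilityTheory

lemma condexp_L2_facts {Ω : Type*} {m m0 : MeasurableSpace Ω} (hm : m ≤ m0)
    {μ : Measure Ω} [IsProbabilityMeasure μ] {f : Ω → ℝ} (hf : MemLp f 2 μ) :
    MemLp (μ[f|m]) 2 μ ∧ ∫ ω, (μ[f|m]) ω ^ 2 ∂μ ≤ ∫ ω, f ω ^ 2 ∂μ := by
  haveI : SigmaFinite (μ.trim hm) := inferInstance
  set fL : Lp ℝ 2 μ := hf.toLp f with hfL
  set gL : Lp ℝ 2 μ := ((condExpL2 ℝ ℝ hm fL : lpMeas ℝ ℝ m 2 μ) : Lp ℝ 2 μ) with hgL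
  have heq : (gL : Ω → ℝ) =ᵐ[μ] μ[f|m] := by
    refine ae_eq_condExp_of_forall_setIntegral_eq hm (hf.integrable one_le_two)
      (fun s _ _ => (integrable_condExpL2_of_isFiniteMeasure hm).integrableOn)
      (fun s hs hμs => ?_) (aestronglyMeasurable_condExpL2 hm fL)
    rw [integral_condExpL2_eq hm fL hs hμs.ne]
    exact setIntegral_congr_ae (hm s hs) ((hf.coeFn_toLp).mono fun x hx _ => hx)
  refine ⟨(Lp.memLp gL).ae_eq heq, ?_⟩
  have h1 : ∫ ω, (μ[f|m]) ω ^ 2 ∂μ = ∫ ω, gL ω * gL ω ∂μ := by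
    refine integral_congr_ae (heq.mono fun x hx => ?_)
    simp only []; rw [← hx]; ring
  have h2 : ∫ ω, f ω ^ 2 ∂μ = ∫ ω, fL ω * fL ω ∂μ := by
    refine integral_congr_ae ((hf.coeFn_toLp).mono fun x hx => ?_)
    simp only []; rw [hx]; ring
  rw [h1, h2]
  have hg : ∫ ω, gL ω * gL ω ∂μ = ‖gL‖ ^ 2 := by
    rw [← real_inner_self_eq_norm_sq, L2.inner_def]; rfl
  have hf2 : ∫ ω, fL ω * fL ω ∂μ = ‖fL‖ ^ 2 := by
    rw [← real_inner_self_eq_norm_sq, L2.inner_def]; rfl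
  rw [hg, hf2]
  have := norm_condExpL2_coe_le (𝕜 := ℝ) hm fL
  nlinarith [norm_nonneg gL, norm_nonneg fL]

/-- The conditional variance of a real random variable `f` given a sub-σ-algebra `m`:
`Var(f | m) = E[f² | m] − (E[f | m])²`. -/
noncomputable def cVar {Ω : Type*} (m : MeasurableSpace Ω) {m0 : MeasurableSpace Ω}
    (μ : Measure Ω) (f : Ω → ℝ) : Ω → ℝ :=
  fun ω => (μ[fun ω' => f ω' ^ 2 | m]) ω - ((μ[f | m]) ω) ^ 2

set_option maxHeartbeats 1000000 in
/-- **Robustness of grouped first-order Sobol' indices to the MFU parametrization**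
(Proposition 3.1).  If the conditional variances given the shared parameters `X_v` are
`ε₁`-close in `L¹` and the total variances are `ε₂`-close, with `Var f = 1`, then the grouped
first-order Sobol' indices of the two MFU groups differ by less than `ε₁ + 2ε₂`. -/
theorem sobol_first_order_robustness
    {Ω U V U' : Type*} [MeasurableSpace Ω] [MeasurableSpace U] [MeasurableSpace V]
    [MeasurableSpace U'] {μ : Measure Ω} [IsProbabilityMeasure μ]
    (Xu : Ω → U) (Xv : Ω → V) (Xu' : Ω → U')
    (hXu : Measurable Xu) (hXv : Measurable Xv) (hXu' : Measurable Xu')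
    (hUV : IndepFun Xu Xv μ) (hU'V : IndepFun Xu' Xv μ)
    (F : U × V → ℝ) (Q : U' × V → ℝ) (hF : Measurable F) (hQ : Measurable Q)
    (f q : Ω → ℝ)
    (hf : f = fun ω => F (Xu ω, Xv ω)) (hq : q = fun ω => Q (Xu' ω, Xv ω))
    (hfL2 : MemLp f 2 μ) (hqL2 : MemLp q 2 μ)
    (ε₁ ε₂ : ℝ) (hε₁ : 0 < ε₁) (hε₂ : 0 < ε₂)
    (h1 : ∫ ω, |cVar (MeasurableSpace.comap Xv inferInstance) μ f ω
        - cVar (MeasurableSpace.comap Xv inferInstance) μ q ω| ∂μ < ε₁)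
    (h2 : |variance f μ - variance q μ| < ε₂)
    (h3 : variance f μ = 1) (h4 : 0 < variance q μ) :
    |variance (μ[f | MeasurableSpace.comap Xv inferInstance]) μ / variance f μ
      - variance (μ[q | MeasurableSpace.comap Xv inferInstance]) μ / variance q μ|
      < ε₁ + 2 * ε₂ := by
  set m := MeasurableSpace.comap Xv inferInstance with hmdef
  have hm : m ≤ _ := hXv.comap_le
  haveI : SigmaFinite (μ.trim hm) := inferInstance
  obtain ⟨hgfL2, hfb⟩ := condexp_L2_facts hm hfL2
  obtain ⟨hgqL2, hqb⟩ := condexp_L2_facts hm hqL2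
  -- notations
  set Gf := ∫ ω, (μ[f|m]) ω ^ 2 ∂μ with hGf
  set Gq := ∫ ω, (μ[q|m]) ω ^ 2 ∂μ with hGq
  set I2f := ∫ ω, f ω ^ 2 ∂μ with hI2f
  set I2q := ∫ ω, q ω ^ 2 ∂μ with hI2q
  -- integrability of the cVar's
  have hintf : Integrable (cVar m μ f) μ :=
    integrable_condExp.sub hgfL2.integrable_sq
  have hintq : Integrable (cVar m μ q) μ :=
    integrable_condExp.sub hgqL2.integrable_sq
  -- values of ∫ cVar
  have hA : ∫ ω, cVar m μ f ω ∂μ = I2f - Gf := by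
    simp only [cVar]
    rw [integral_sub integrable_condExp hgfL2.integrable_sq, integral_condExp hm]
  have hB : ∫ ω, cVar m μ q ω ∂μ = I2q - Gq := by
    simp only [cVar]
    rw [integral_sub integrable_condExp hgqL2.integrable_sq, integral_condExp hm]
  -- |A - B| < ε₁
  have hAB : |(I2f - Gf) - (I2q - Gq)| < ε₁ := by
    rw [← hA, ← hB, ← integral_sub hintf hintq]
    have hle := norm_integral_le_integral_norm (μ := μ)
      (fun ω => cVar m μ f ω - cVar m μ q ω)
    simp only [Real.norm_eq_abs] at hle
    exact lt_of_le_of_lt hle h1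
  -- variance identities
  have hvf : variance f μ = I2f - (∫ ω, f ω ∂μ) ^ 2 := by
    rw [variance_eq_sub hfL2]; rfl
  have hvq : variance q μ = I2q - (∫ ω, q ω ∂μ) ^ 2 := by
    rw [variance_eq_sub hqL2]; rfl
  have hvgf : variance (μ[f|m]) μ = Gf - (∫ ω, f ω ∂μ) ^ 2 := by
    rw [variance_eq_sub hgfL2, integral_condExp hm]; rfl
  have hvgq : variance (μ[q|m]) μ = Gq - (∫ ω, q ω ∂μ) ^ 2 := by
    rw [variance_eq_sub hgqL2, integral_condExp hm]; rfl
  have hq0 : 0 ≤ variance (μ[q|m]) μ := variance_nonneg _ _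
  -- arithmetic finish
  set Vq := variance q μ with hVq
  set A := I2f - Gf with hAdef
  set B := I2q - Gq with hBdef
  have hB0 : 0 ≤ B := by rw [hBdef]; linarith [hqb]
  have hBV : B ≤ Vq := by
    have : variance (μ[q|m]) μ = Vq - B := by rw [hvgq, hvq]; ring
    linarith [hq0, this]
  have hVf1 : I2f - (∫ ω, f ω ∂μ) ^ 2 = 1 := by rw [← hvf, h3]
  have h2' : |1 - Vq| < ε₂ := by rw [← h3]; exact h2
  rw [h3, hvgf, hvgq, hvq]
  have hexp : (Gf - (∫ ω, f ω ∂μ) ^ 2) / 1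
      - (Gq - (∫ ω, q ω ∂μ) ^ 2) / Vq = (B / Vq - B) + (B - A) := by
    have hVq' : Vq ≠ 0 := ne_of_gt h4
    field_simp
    rw [hvq] at hVq' ⊢
    nlinarith [hVf1]
  rw [← hvq, hexp]
  have hr1 : |B / Vq - B| ≤ ε₂ := by
    have h5 : B / Vq - B = (B / Vq) * (1 - Vq) := by field_simp
    rw [h5, abs_mul]
    have hr0 : 0 ≤ B / Vq := div_nonneg hB0 h4.le
    have hr2 : B / Vq ≤ 1 := (div_le_one h4).2 hBV
    have := abs_of_nonneg hr0
    nlinarith [abs_nonneg (1 - Vq), h2'.le]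
  clear_value Vq A B Gf Gq I2f I2q
  have hABs : |B - A| < ε₁ := by rw [abs_sub_comm]; exact hAB
  have habs : |B / Vq - B + (B - A)| ≤ |B / Vq - B| + |B - A| := abs_add_le _ _
  linarith
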